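/- Let Ω be a p×p diagonal matrix with nonnegative diagonal entries, and let γ(z) = exp(−zᵀΩz). Then for every z ∈ ℝ^p, the Hessian of γ satisfies the Loewner-order bound ∇²γ(z) ⪯ (4/e) (max_{1≤l≤p} Ω_{ll}) I_p, i.e., (4/e)(max_l Ω_{ll}) I_p − ∇²γ(z) is positive semidefinite, where I_p is the p×p identity matrix and e is Euler's number. -/

import Mathlib

/-- **Loewner bound on the Hessian of the Gaussian kernel.**
For a `p×p` diagonal matrix `Ω` with nonnegative diagonal entries `ω_l` and
`γ(z) = exp(-zᵀΩz)`, whose Hessian is `∇²γ(z) = 2γ(z)(2Ωz(Ωz)ᵀ - Ω)`, one has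
`∇²γ(z) ⪯ (4/e)(max_l ω_l) I_p` for every `z ∈ ℝ^p`; that is,
`(4/e)(max_l ω_l) I_p - ∇²γ(z)` is positive semidefinite. -/
theorem gauss_kernel_hessian_loewner_bound (p : ℕ) (hp : 0 < p)
    (ω : Fin p → ℝ) (hω : ∀ l, 0 ≤ ω l) (z : Fin p → ℝ) :
    (((4 / Real.exp 1) * (⨆ l, ω l)) • (1 : Matrix (Fin p) (Fin p) ℝ)
      - Matrix.of (fun i j : Fin p =>
          2 * Real.exp (-∑ l, ω l * z l ^ 2) *
            (2 * (ω i * z i) * (ω j * z j) - if i = j then ω i else 0))).PosSemidef := by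
  classical
  have : Nonempty (Fin p) := ⟨⟨0, hp⟩⟩
  set s := ∑ l, ω l * z l ^ 2 with hsdef
  set γ := Real.exp (-s) with hγdef
  have hs0 : 0 ≤ s := Finset.sum_nonneg fun l _ => mul_nonneg (hω l) (sq_nonneg _)
  have hγ0 : 0 < γ := Real.exp_pos _
  set c := (4 / Real.exp 1) * (⨆ l, ω l) with hcdef
  have hbdd : BddAbove (Set.range ω) := Set.Finite.bddAbove (Set.finite_range ω)
  have hsup : ∀ l, ω l ≤ ⨆ l, ω l := fun l => le_ciSup hbdd l
  have hsup0 : 0 ≤ ⨆ l, ω l := le_trans (hω ⟨0, hp⟩) (hsup _)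
  -- s * γ ≤ 1 / e
  have hse : s * γ ≤ 1 / Real.exp 1 := by
    have h1 : s * Real.exp 1 ≤ Real.exp s := by
      have h0 := Real.add_one_le_exp (s - 1)
      have h2 : Real.exp (s - 1) = Real.exp s / Real.exp 1 := Real.exp_sub s 1
      rw [h2] at h0
      have he : (0:ℝ) < Real.exp 1 := Real.exp_pos 1
      rw [le_div_iff₀ he] at h0
      nlinarith
    rw [hγdef, Real.exp_neg, ← div_eq_mul_inv,
      div_le_div_iff₀ (Real.exp_pos s) (Real.exp_pos 1)]
    nlinarith
  rw [Matrix.posSemidef_iff_dotProduct_mulVec]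
  constructor
  · -- Hermitian
    ext i j
    simp only [Matrix.conjTranspose_apply, Matrix.sub_apply, Matrix.smul_apply,
      Matrix.one_apply, Matrix.of_apply, star_trivial, smul_eq_mul]
    by_cases h : i = j
    · subst h; simp
    · have h' : ¬ j = i := fun hh => h hh.symm
      simp only [h, h', if_false]
      ring
  · intro x
    simp only [star_trivial]
    -- compute the quadratic form of the Hessian part
    have key : dotProduct x ((Matrix.of (fun i j : Fin p =>
          2 * γ * (2 * (ω i * z i) * (ω j * z j) - if i = j then ω i else 0))).mulVec x)
        = 4 * γ * (∑ l, ω l * z l * x l) ^ 2 - 2 * γ * ∑ l, ω l * x l ^ 2 := by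
      simp only [dotProduct, Matrix.mulVec, Matrix.of_apply]
      have step : ∀ i : Fin p,
          x i * ∑ j, (2 * γ * (2 * (ω i * z i) * (ω j * z j) - if i = j then ω i else 0)) * x j
          = (∑ j, 4 * γ * (ω i * z i * x i) * (ω j * z j * x j)) - 2 * γ * (ω i * x i ^ 2) := by
        intro i
        rw [Finset.mul_sum]
        rw [show (∑ j, x i * ((2 * γ * (2 * (ω i * z i) * (ω j * z j) - if i = j then ω i else 0)) * x j))
            = ∑ j, (4 * γ * (ω i * z i * x i) * (ω j * z j * x j)
                - if i = j then 2 * γ * (ω i * x i ^ 2) else 0) from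
          Finset.sum_congr rfl fun j _ => by
            split_ifs with h
            · subst h; ring
            · ring]
        rw [Finset.sum_sub_distrib, Finset.sum_ite_eq Finset.univ i
          (fun _ => 2 * γ * (ω i * x i ^ 2))]
        simp
      calc (∑ i, x i * ∑ j, (2 * γ * (2 * (ω i * z i) * (ω j * z j) - if i = j then ω i else 0)) * x j)
          = ∑ i, ((∑ j, 4 * γ * (ω i * z i * x i) * (ω j * z j * x j)) - 2 * γ * (ω i * x i ^ 2)) :=
            Finset.sum_congr rfl fun i _ => step i
        _ = 4 * γ * (∑ l, ω l * z l * x l) ^ 2 - 2 * γ * ∑ l, ω l * x l ^ 2 := by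
            rw [Finset.sum_sub_distrib]
            congr 1
            · rw [sq, Finset.sum_mul_sum, Finset.mul_sum]
              refine Finset.sum_congr rfl fun i _ => ?_
              rw [Finset.mul_sum]
              exact Finset.sum_congr rfl fun j _ => by ring
            · rw [Finset.mul_sum]
    have hqf : dotProduct x ((c • (1 : Matrix (Fin p) (Fin p) ℝ)
        - Matrix.of (fun i j : Fin p =>
          2 * γ * (2 * (ω i * z i) * (ω j * z j) - if i = j then ω i else 0))).mulVec x)
        = c * ∑ l, x l ^ 2
          - (4 * γ * (∑ l, ω l * z l * x l) ^ 2 - 2 * γ * ∑ l, ω l * x l ^ 2) := by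
      rw [Matrix.sub_mulVec, dotProduct_sub, key, Matrix.smul_mulVec,
        Matrix.one_mulVec, dotProduct_smul]
      congr 1
      simp [dotProduct, smul_eq_mul, Finset.mul_sum, sq, mul_comm]
    rw [hqf]
    -- Cauchy–Schwarz: (∑ ω z x)^2 ≤ s * t
    set t := ∑ l, ω l * x l ^ 2 with htdef
    have ht0 : 0 ≤ t := Finset.sum_nonneg fun l _ => mul_nonneg (hω l) (sq_nonneg _)
    have hCS : (∑ l, ω l * z l * x l) ^ 2 ≤ s * t := by
      have h := Finset.sum_mul_sq_le_sq_mul_sq Finset.univ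
        (fun l => Real.sqrt (ω l) * z l) (fun l => Real.sqrt (ω l) * x l)
      have e1 : (∑ l, (Real.sqrt (ω l) * z l) * (Real.sqrt (ω l) * x l))
          = ∑ l, ω l * z l * x l :=
        Finset.sum_congr rfl fun l _ => by
          rw [mul_mul_mul_comm, Real.mul_self_sqrt (hω l)]; ring
      have e2 : (∑ l, (Real.sqrt (ω l) * z l) ^ 2) = s :=
        Finset.sum_congr rfl fun l _ => by
          rw [mul_pow, Real.sq_sqrt (hω l)]
      have e3 : (∑ l, (Real.sqrt (ω l) * x l) ^ 2) = t :=
        Finset.sum_congr rfl fun l _ => by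
          rw [mul_pow, Real.sq_sqrt (hω l)]
      rw [e1, e2, e3] at h
      exact h
    have hT : t ≤ (⨆ l, ω l) * ∑ l, x l ^ 2 := by
      rw [Finset.mul_sum]
      exact Finset.sum_le_sum fun l _ => mul_le_mul_of_nonneg_right (hsup l) (sq_nonneg _)
    have hsum0 : 0 ≤ ∑ l, x l ^ 2 := Finset.sum_nonneg fun l _ => sq_nonneg _
    -- 4 γ (∑ ω z x)^2 ≤ 4 γ s t ≤ (4/e) t ≤ c ∑ x²
    have h1 : 4 * γ * (∑ l, ω l * z l * x l) ^ 2 ≤ 4 * (s * γ) * t := by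
      nlinarith [hγ0, hCS]
    have h2 : 4 * (s * γ) * t ≤ (4 / Real.exp 1) * t := by
      have : 4 * (s * γ) ≤ 4 / Real.exp 1 := by
        rw [div_eq_mul_one_div]
        nlinarith [hse]
      exact mul_le_mul_of_nonneg_right this ht0
    have h3 : (4 / Real.exp 1) * t ≤ c * ∑ l, x l ^ 2 := by
      rw [hcdef, mul_assoc]
      exact mul_le_mul_of_nonneg_left hT (by positivity)
    nlinarith [hγ0, ht0]
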